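/- arXiv:1503.01271 — 4 statements merged into one kernel-verified Lean document; each statement's English description precedes it below -/
import Mathlib

section
/- Let c > 0, σ > 0, and suppose m(z) satisfies the Marchenko–Pastur fixed point equation m(z) = 1/(-z(1 + σ²c·m(z)) + σ²(1-c)) at a point z where all denominators are nonzero. Define w(z) = z(1 + σ²c·m(z))² - σ²(1-c)(1 + σ²c·m(z)) and φ(λ) = (λ + σ²)(λ + σ²c)/λ. Then φ(w(z)) = z, provided w(z) ≠ 0. -/
/-- If `m` satisfies the Marchenko–Pastur fixed point equation
`m = 1/(-z(1 + σ²c m) + σ²(1-c))` at a point `z` where the denominator is nonzero,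
then with `w = z(1 + σ²c m)² - σ²(1-c)(1 + σ²c m)` and `φ(λ) = (λ + σ²)(λ + σ²c)/λ`,
we have `φ(w) = z`, provided `w ≠ 0`. -/
theorem phi_w_eq_z (c σ : ℝ) (hc : 0 < c) (hσ : 0 < σ) (z m : ℂ)
    (hden : -z * (1 + (σ : ℂ) ^ 2 * (c : ℂ) * m) + (σ : ℂ) ^ 2 * (1 - (c : ℂ)) ≠ 0)
    (hfix : m = 1 / (-z * (1 + (σ : ℂ) ^ 2 * (c : ℂ) * m) + (σ : ℂ) ^ 2 * (1 - (c : ℂ))))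
    (w : ℂ)
    (hw : w = z * (1 + (σ : ℂ) ^ 2 * (c : ℂ) * m) ^ 2
        - (σ : ℂ) ^ 2 * (1 - (c : ℂ)) * (1 + (σ : ℂ) ^ 2 * (c : ℂ) * m))
    (hw0 : w ≠ 0) :
    (w + (σ : ℂ) ^ 2) * (w + (σ : ℂ) ^ 2 * (c : ℂ)) / w = z := by
  set s : ℂ := (σ : ℂ) ^ 2 with hs
  set u : ℂ := 1 + s * (c : ℂ) * m with hu
  have hm : m * (-z * u + s * (1 - (c : ℂ))) = 1 := by
    rw [hfix]; exact one_div_mul_cancel hden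
  subst hw
  rw [div_eq_iff hw0]
  linear_combination (-(s * (c : ℂ) * u * (u + 1)) * z
      + s ^ 2 * (c : ℂ) * ((1 - (c : ℂ)) * u - (c : ℂ))) * hm
end

section
/- Let c > 0, α > 0 with sinc(αc/2) ≠ ±1. For β ∈ ℝ define κ(β) = (1/(1 - sinc(αc/2)²)) · (sinc(βc/2)² + sinc((β-α)c/2)² - 2·sinc(αc/2)·sinc(βc/2)·sinc((β-α)c/2)). Then κ(β) ≤ 1 for all β, and κ(β) = 1 if and only if β = 0 or β = α. -/
/-- `sinc(x) = sin(x)/x` for `x ≠ 0`, `sinc(0) = 1`. -/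
noncomputable def sinc (x : ℝ) : ℝ := if x = 0 then 1 else Real.sin x / x

open MeasureTheory intervalIntegral Set Filter
open Real hiding sinc

lemma sinc_zero' : sinc 0 = 1 := by simp [sinc]

lemma sinc_neg' (x : ℝ) : sinc (-x) = sinc x := by
  rcases eq_or_ne x 0 with h | h
  · simp [h]
  · simp [sinc, h, neg_ne_zero.mpr h, Real.sin_neg, neg_div_neg_eq]

lemma sinc_sq_lt_one' {x : ℝ} (h : x ≠ 0) : sinc x ^ 2 < 1 := by
  have h1 : |Real.sin x| < |x| := Real.abs_sin_lt_abs h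
  have h2 : |sinc x| < 1 := by
    rw [sinc, if_neg h, abs_div, div_lt_one (abs_pos.mpr h)]
    exact h1
  calc sinc x ^ 2 = |sinc x| ^ 2 := (sq_abs _).symm
    _ < 1 := by nlinarith [abs_nonneg (sinc x)]

lemma integral_cos_lin' (θ : ℝ) :
    ∫ t in (0:ℝ)..1, Real.cos (2 * θ * t - θ) = sinc θ := by
  rcases eq_or_ne θ 0 with h | h
  · simp [h, sinc_zero']
  · have h2 : (2 : ℝ) * θ ≠ 0 := mul_ne_zero two_ne_zero h
    have key := intervalIntegral.integral_comp_mul_add (a := (0:ℝ)) (b := 1)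
      (f := Real.cos) h2 (-θ)
    simp only [mul_zero, zero_add, mul_one] at key
    have heq : (fun t : ℝ => Real.cos (2 * θ * t - θ)) =
        fun t : ℝ => Real.cos (2 * θ * t + -θ) := by
      funext t; ring_nf
    calc ∫ t in (0:ℝ)..1, Real.cos (2 * θ * t - θ)
        = ∫ t in (0:ℝ)..1, Real.cos (2 * θ * t + -θ) := by rw [heq]
      _ = (2*θ)⁻¹ • ∫ u in (-θ)..(2*θ + -θ), Real.cos u := key
      _ = sinc θ := by
          rw [integral_cos]
          have h3 : 2*θ + -θ = θ := by ring
          rw [h3, Real.sin_neg, sinc, if_neg h, smul_eq_mul]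
          field_simp
          ring

lemma f_expand' (x m l u t : ℝ) :
    (Real.cos (2*x*t - x) - l - u * Real.cos (2*m*t - m))^2
      + (Real.sin (2*x*t - x) - u * Real.sin (2*m*t - m))^2
    = (1 + l^2 + u^2) - 2*l*Real.cos (2*x*t - x)
      - 2*u*Real.cos (2*(x-m)*t - (x-m)) + 2*l*u*Real.cos (2*m*t - m) := by
  have hB : 2*(x-m)*t - (x-m) = (2*x*t - x) - (2*m*t - m) := by ring
  have hc : Real.cos ((2*x*t - x) - (2*m*t - m)) = Real.cos (2*x*t - x) * Real.cos (2*m*t - m)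
      + Real.sin (2*x*t - x) * Real.sin (2*m*t - m) := Real.cos_sub _ _
  rw [hB, hc]
  have h1 := Real.sin_sq_add_cos_sq (2*x*t - x)
  have h2 := Real.sin_sq_add_cos_sq (2*m*t - m)
  linear_combination h1 + u^2 * h2

lemma integral_f' (x m l u : ℝ) :
    ∫ t in (0:ℝ)..1, ((Real.cos (2*x*t - x) - l - u * Real.cos (2*m*t - m))^2
      + (Real.sin (2*x*t - x) - u * Real.sin (2*m*t - m))^2)
    = 1 + l^2 + u^2 - 2*l*sinc x - 2*u*sinc (x-m) + 2*l*u*sinc m := by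
  have hrw : (fun t : ℝ => (Real.cos (2*x*t - x) - l - u * Real.cos (2*m*t - m))^2
      + (Real.sin (2*x*t - x) - u * Real.sin (2*m*t - m))^2)
      = fun t : ℝ => (1 + l^2 + u^2) - 2*l*Real.cos (2*x*t - x)
      - 2*u*Real.cos (2*(x-m)*t - (x-m)) + 2*l*u*Real.cos (2*m*t - m) :=
    funext fun t => f_expand' x m l u t
  have hic : ∀ θ c : ℝ, IntervalIntegrable (fun t => c * Real.cos (2*θ*t - θ))
      volume 0 1 := fun θ c => (by fun_prop : Continuous
        (fun t : ℝ => c * Real.cos (2*θ*t - θ))).intervalIntegrable 0 1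
  rw [hrw]
  have h1 := hic x (2*l)
  have h2 := hic (x-m) (2*u)
  have h3 := hic m (2*l*u)
  have hconst : IntervalIntegrable (fun _ : ℝ => 1 + l^2 + u^2) volume 0 1 :=
    intervalIntegrable_const
  rw [intervalIntegral.integral_add (((hconst.sub h1).sub h2)) h3,
    intervalIntegral.integral_sub (hconst.sub h1) h2,
    intervalIntegral.integral_sub hconst h1]
  have e1 : ∫ t in (0:ℝ)..1, 2*l*Real.cos (2*x*t - x) = 2*l*sinc x := by
    rw [intervalIntegral.integral_const_mul, integral_cos_lin']
  have e2 : ∫ t in (0:ℝ)..1, 2*u*Real.cos (2*(x-m)*t - (x-m)) = 2*u*sinc (x-m) := by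
    rw [intervalIntegral.integral_const_mul, integral_cos_lin']
  have e3 : ∫ t in (0:ℝ)..1, 2*l*u*Real.cos (2*m*t - m) = 2*l*u*sinc m := by
    rw [intervalIntegral.integral_const_mul, integral_cos_lin']
  rw [e1, e2, e3, intervalIntegral.integral_const]
  simp

lemma rigid' (x m l u : ℝ) (hm : m ≠ 0)
    (h0 : ∀ t ∈ Set.Ioc (0:ℝ) 1,
      (Real.cos (2*x*t - x) - l - u * Real.cos (2*m*t - m))^2
        + (Real.sin (2*x*t - x) - u * Real.sin (2*m*t - m))^2 = 0) :
    x = 0 ∨ x = m := by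
  set g : ℝ → ℝ := fun t => Real.cos (2*x*t - x) - l - u * Real.cos (2*m*t - m) with hgdef
  set h : ℝ → ℝ := fun t => Real.sin (2*x*t - x) - u * Real.sin (2*m*t - m) with hhdef
  have hg0 : ∀ t ∈ Set.Ioc (0:ℝ) 1, g t = 0 := by
    intro t ht
    have h2 : g t ^ 2 + h t ^ 2 = 0 := h0 t ht
    have h3 : g t ^ 2 = 0 :=
      le_antisymm (by nlinarith [sq_nonneg (h t)]) (sq_nonneg _)
    exact pow_eq_zero_iff two_ne_zero |>.mp h3
  have hh0 : ∀ t ∈ Set.Ioc (0:ℝ) 1, h t = 0 := by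
    intro t ht
    have h2 : g t ^ 2 + h t ^ 2 = 0 := h0 t ht
    have h3 : h t ^ 2 = 0 :=
      le_antisymm (by nlinarith [sq_nonneg (g t)]) (sq_nonneg _)
    exact pow_eq_zero_iff two_ne_zero |>.mp h3
  have hmem : Set.Ioo (0:ℝ) 1 ∈ nhds (1/2 : ℝ) :=
    isOpen_Ioo.mem_nhds (by norm_num)
  have hhe : h =ᶠ[nhds (1/2 : ℝ)] (fun _ => 0) :=
    Filter.eventuallyEq_of_mem hmem (fun t ht => hh0 t (Set.Ioo_subset_Ioc_self ht))
  have hge : g =ᶠ[nhds (1/2 : ℝ)] (fun _ => 0) :=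
    Filter.eventuallyEq_of_mem hmem (fun t ht => hg0 t (Set.Ioo_subset_Ioc_self ht))
  have hlin : ∀ (θ t : ℝ), HasDerivAt (fun s : ℝ => 2*θ*s - θ) (2*θ) t := by
    intro θ t
    simpa using ((hasDerivAt_id t).const_mul (2*θ)).sub_const θ
  have hdh : ∀ t : ℝ, HasDerivAt h
      (Real.cos (2*x*t - x) * (2*x) - u * (Real.cos (2*m*t - m) * (2*m))) t := by
    intro t
    exact ((Real.hasDerivAt_sin (2*x*t - x)).comp t (hlin x t)).sub
      (((Real.hasDerivAt_sin (2*m*t - m)).comp t (hlin m t)).const_mul u)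
  have hdh0 : Real.cos (2*x*(1/2) - x) * (2*x) - u * (Real.cos (2*m*(1/2) - m) * (2*m)) = 0 := by
    have := hhe.deriv_eq
    rw [(hdh (1/2)).deriv, deriv_const] at this
    exact this
  have hx_um : x = u * m := by
    have hx2 : 2*x*(1/2 : ℝ) - x = 0 := by ring
    have hm2 : 2*m*(1/2 : ℝ) - m = 0 := by ring
    rw [hx2, hm2, Real.cos_zero] at hdh0
    linarith
  have hdg : ∀ t : ℝ, HasDerivAt g
      (-Real.sin (2*x*t - x) * (2*x) + u * (Real.sin (2*m*t - m) * (2*m))) t := by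
    intro t
    have h1 : HasDerivAt (fun s : ℝ => Real.cos (2*x*s - x))
        (-Real.sin (2*x*t - x) * (2*x)) t :=
      (Real.hasDerivAt_cos (2*x*t - x)).comp (h₂ := Real.cos) t (hlin x t)
    have h2 : HasDerivAt (fun s : ℝ => u * Real.cos (2*m*s - m))
        (u * (-Real.sin (2*m*t - m) * (2*m))) t :=
      ((Real.hasDerivAt_cos (2*m*t - m)).comp (h₂ := Real.cos) t (hlin m t)).const_mul u
    have := (h1.sub_const l).sub h2
    exact this.congr_deriv (by ring)
  have hderivg : deriv g = fun t =>
      -Real.sin (2*x*t - x) * (2*x) + u * (Real.sin (2*m*t - m) * (2*m)) :=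
    funext fun t => (hdg t).deriv
  have hge' : deriv g =ᶠ[nhds (1/2 : ℝ)] (fun _ => 0) := by
    have := hge.deriv
    simpa using this
  have hG : ∀ t : ℝ, HasDerivAt (fun s => -Real.sin (2*x*s - x) * (2*x)
      + u * (Real.sin (2*m*s - m) * (2*m)))
      (-(Real.cos (2*x*t - x) * (2*x)) * (2*x)
        + u * (Real.cos (2*m*t - m) * (2*m) * (2*m))) t := by
    intro t
    have h1 : HasDerivAt (fun s : ℝ => Real.sin (2*x*s - x))
        (Real.cos (2*x*t - x) * (2*x)) t :=
      (Real.hasDerivAt_sin (2*x*t - x)).comp (h₂ := Real.sin) t (hlin x t)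
    have h2 : HasDerivAt (fun s : ℝ => Real.sin (2*m*s - m))
        (Real.cos (2*m*t - m) * (2*m)) t :=
      (Real.hasDerivAt_sin (2*m*t - m)).comp (h₂ := Real.sin) t (hlin m t)
    have := (h1.const_mul (-(2*x))).add ((h2.const_mul (2*m)).const_mul u)
    have hfun : (fun s => -Real.sin (2*x*s - x) * (2*x) + u * (Real.sin (2*m*s - m) * (2*m)))
        = ((fun y => -(2 * x) * Real.sin (2 * x * y - x))
          + fun y => u * (2 * m * Real.sin (2 * m * y - m))) := by
      funext s; simp only [Pi.add_apply]; ring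
    rw [hfun]
    exact this.congr_deriv (by ring)
  have hdd0 : -(Real.cos (2*x*(1/2) - x) * (2*x)) * (2*x)
      + u * (Real.cos (2*m*(1/2) - m) * (2*m) * (2*m)) = 0 := by
    have heq2 : deriv (deriv g) (1/2 : ℝ) = 0 := by
      rw [hge'.deriv_eq, deriv_const]
    rw [hderivg] at heq2
    rw [← (hG (1/2)).deriv]
    exact heq2
  have hx2m : u * m^2 = x^2 := by
    have hx2 : 2*x*(1/2 : ℝ) - x = 0 := by ring
    have hm2 : 2*m*(1/2 : ℝ) - m = 0 := by ring
    rw [hx2, hm2, Real.cos_zero] at hdd0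
    linear_combination hdd0 / 4
  have : u * (u - 1) * m^2 = 0 := by
    linear_combination (-(x + u*m)) * hx_um + (-1 : ℝ) * hx2m
  have hm2 : m^2 ≠ 0 := pow_ne_zero 2 hm
  rcases mul_eq_zero.mp this with h1 | h2
  · rcases mul_eq_zero.mp h1 with h3 | h4
    · left; rw [hx_um, h3, zero_mul]
    · right
      have hu1 : u = 1 := by linarith
      rw [hx_um, hu1, one_mul]
  · exact absurd h2 hm2

/-- The key inequality and equality characterization. -/
lemma key' (x m : ℝ) (hm : m ≠ 0) :
    sinc x ^ 2 + sinc (x-m) ^ 2 - 2 * sinc m * sinc x * sinc (x-m) ≤ 1 - sinc m ^ 2 ∧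
    (sinc x ^ 2 + sinc (x-m) ^ 2 - 2 * sinc m * sinc x * sinc (x-m) = 1 - sinc m ^ 2
      ↔ x = 0 ∨ x = m) := by
  set s := sinc m with hs
  set a := sinc x with ha
  set b := sinc (x-m) with hb
  have hs2 : s ^ 2 < 1 := sinc_sq_lt_one' hm
  have hden : 0 < 1 - s ^ 2 := by linarith
  set l : ℝ := (a - s*b)/(1 - s^2) with hl
  set u : ℝ := (b - s*a)/(1 - s^2) with hu
  have hI := integral_f' x m l u
  have hIval : 1 + l^2 + u^2 - 2*l*a - 2*u*b + 2*l*u*s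
      = 1 - (a^2 + b^2 - 2*s*a*b)/(1 - s^2) := by
    rw [hl, hu]
    field_simp
    ring
  have hpos : 0 ≤ ∫ t in (0:ℝ)..1, ((Real.cos (2*x*t - x) - l - u * Real.cos (2*m*t - m))^2
      + (Real.sin (2*x*t - x) - u * Real.sin (2*m*t - m))^2) :=
    intervalIntegral.integral_nonneg (by norm_num) (fun t _ => by positivity)
  have hineq : a^2 + b^2 - 2*s*a*b ≤ 1 - s^2 := by
    rw [hI, hIval] at hpos
    have h4 : (a^2 + b^2 - 2*s*a*b)/(1 - s^2) ≤ 1 := by linarith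
    have := (div_le_one hden).mp h4
    linarith
  refine ⟨hineq, ?_, ?_⟩
  · intro heq
    have hzero : ∫ t in (0:ℝ)..1, ((Real.cos (2*x*t - x) - l - u * Real.cos (2*m*t - m))^2
        + (Real.sin (2*x*t - x) - u * Real.sin (2*m*t - m))^2) = 0 := by
      rw [hI, hIval, heq, div_self hden.ne']
      ring
    have hfc : Continuous (fun t : ℝ =>
        (Real.cos (2*x*t - x) - l - u * Real.cos (2*m*t - m))^2
        + (Real.sin (2*x*t - x) - u * Real.sin (2*m*t - m))^2) := by fun_prop
    have hint : IntervalIntegrable (fun t : ℝ =>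
        (Real.cos (2*x*t - x) - l - u * Real.cos (2*m*t - m))^2
        + (Real.sin (2*x*t - x) - u * Real.sin (2*m*t - m))^2) volume 0 1 :=
      hfc.intervalIntegrable 0 1
    have hae : (0 : ℝ → ℝ) ≤ᵐ[volume.restrict (Set.Ioc (0:ℝ) 1)] (fun t : ℝ =>
        (Real.cos (2*x*t - x) - l - u * Real.cos (2*m*t - m))^2
        + (Real.sin (2*x*t - x) - u * Real.sin (2*m*t - m))^2) :=
      Filter.Eventually.of_forall fun t => by positivity
    have hae0 := (intervalIntegral.integral_eq_zero_iff_of_le_of_nonneg_ae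
      (by norm_num) hae hint).mp hzero
    have hEq := MeasureTheory.Measure.eqOn_Ioc_of_ae_eq (μ := volume) hae0
      hfc.continuousOn continuous_const.continuousOn
    exact rigid' x m l u hm (fun t ht => hEq ht)
  · rintro (h | h)
    · have ha1 : a = 1 := by rw [ha, h]; exact sinc_zero'
      have hb1 : b = s := by
        rw [hb, h, zero_sub, sinc_neg']
      rw [ha1, hb1]; ring
    · have ha1 : a = s := by rw [ha, h]
      have hb1 : b = 1 := by
        rw [hb, h, sub_self]
        exact sinc_zero'
      rw [ha1, hb1]; ring

/-- The limiting G-MUSIC localization function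
`κ(β) = (sinc(βc/2)² + sinc((β-α)c/2)² - 2 sinc(αc/2) sinc(βc/2) sinc((β-α)c/2))
        / (1 - sinc(αc/2)²)`
satisfies `κ(β) ≤ 1`, with equality iff `β = 0` or `β = α`. -/
theorem kappa_le_one (c α : ℝ) (hc : 0 < c) (hα : 0 < α)
    (hs : sinc (α * c / 2) ≠ 1 ∧ sinc (α * c / 2) ≠ -1)
    (κ : ℝ → ℝ)
    (hκ : ∀ β : ℝ, κ β = (1 / (1 - sinc (α * c / 2) ^ 2)) *
        (sinc (β * c / 2) ^ 2 + sinc ((β - α) * c / 2) ^ 2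
          - 2 * sinc (α * c / 2) * sinc (β * c / 2) * sinc ((β - α) * c / 2))) :
    (∀ β : ℝ, κ β ≤ 1) ∧ (∀ β : ℝ, κ β = 1 ↔ β = 0 ∨ β = α) := by
  have hm : α * c / 2 ≠ 0 := by positivity
  have hs2 : sinc (α * c / 2) ^ 2 < 1 := sinc_sq_lt_one' hm
  have hden : 0 < 1 - sinc (α * c / 2) ^ 2 := by linarith
  have hsub : ∀ β : ℝ, (β - α) * c / 2 = β * c / 2 - α * c / 2 := fun β => by ring
  constructor
  · intro β
    rw [hκ β, hsub β]
    have h1 := (key' (β * c / 2) (α * c / 2) hm).1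
    rw [one_div, inv_mul_eq_div, div_le_one hden]
    linarith
  · intro β
    rw [hκ β, hsub β, one_div, inv_mul_eq_div, div_eq_one_iff_eq hden.ne']
    have h2 := (key' (β * c / 2) (α * c / 2) hm).2
    rw [h2]
    constructor
    · rintro (h | h)
      · left
        have : β * c = 0 := by linarith
        rcases mul_eq_zero.mp this with h' | h'
        · exact h'
        · exact absurd h' hc.ne'
      · right
        have : β * c = α * c := by linarith
        exact mul_right_cancel₀ hc.ne' this
    · rintro (rfl | rfl)
      · left; ring
      · right; ring
end

section
/- Let σ > 0 and 0 < c. The Marchenko–Pastur density f(x) = √((x - x⁻)(x⁺ - x))/(2σ²cπx) on [x⁻, x⁺], where x⁻ = σ²(1-√c)² and x⁺ = σ²(1+√c)², together with an atom of mass (1 - 1/c)⁺ at 0, defines a probability measure, i.e., (1 - 1/c)⁺ + ∫_{x⁻}^{x⁺} f(x) dx = 1. -/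
open scoped Real

open Real


set_option maxHeartbeats 1000000 in
lemma mp_key (a b : ℝ) (ha : 0 < a) (hab : a < b) :
    ∫ x in a..b, Real.sqrt ((x - a) * (b - x)) / x
      = π * ((a + b) / 2 - Real.sqrt (a * b)) := by
  have hba : 0 < b - a := by linarith
  have hb : 0 < b := ha.trans hab
  have hcont : ContinuousOn (fun x =>
      Real.sqrt ((x - a) * (b - x)) + (a + b) / 2 * arcsin ((2 * x - (a + b)) / (b - a))
        - Real.sqrt (a * b) * arcsin (((a + b) * x - 2 * (a * b)) / ((b - a) * x)))
      (Set.Icc a b) := by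
    have c1 : Continuous fun x : ℝ => Real.sqrt ((x - a) * (b - x)) :=
      (continuous_sqrt.comp (by continuity))
    have c2 : Continuous fun x : ℝ => (a + b) / 2 * arcsin ((2 * x - (a + b)) / (b - a)) :=
      continuous_const.mul (continuous_arcsin.comp (by continuity))
    have c3 : ContinuousOn (fun x : ℝ =>
        Real.sqrt (a * b) * arcsin (((a + b) * x - 2 * (a * b)) / ((b - a) * x)))
        (Set.Icc a b) := by
      apply ContinuousOn.mul continuousOn_const
      apply Real.continuous_arcsin.comp_continuousOn
      apply ContinuousOn.div (by fun_prop) (by fun_prop)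
      intro x hx
      have : 0 < x := lt_of_lt_of_le ha hx.1
      positivity
    exact ((c1.continuousOn.add c2.continuousOn).sub c3)
  have hderiv : ∀ x ∈ Set.Ioo a b,
      HasDerivAt (fun x =>
        Real.sqrt ((x - a) * (b - x)) + (a + b) / 2 * arcsin ((2 * x - (a + b)) / (b - a))
          - Real.sqrt (a * b) * arcsin (((a + b) * x - 2 * (a * b)) / ((b - a) * x)))
        (Real.sqrt ((x - a) * (b - x)) / x) x := by
    intro x hx
    obtain ⟨hxa, hxb⟩ := hx
    have hx0 : 0 < x := ha.trans hxa
    have hprod : 0 < (x - a) * (b - x) := mul_pos (by linarith) (by linarith)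
    set s := Real.sqrt ((x - a) * (b - x)) with hs
    have hs0 : 0 < s := Real.sqrt_pos.mpr hprod
    have hs2 : s ^ 2 = (x - a) * (b - x) := Real.sq_sqrt hprod.le
    set t := Real.sqrt (a * b) with ht
    have ht0 : 0 < t := Real.sqrt_pos.mpr (mul_pos ha hb)
    have ht2 : t ^ 2 = a * b := Real.sq_sqrt (mul_pos ha hb).le
    -- first piece
    have hpoly : HasDerivAt (fun x : ℝ => (x - a) * (b - x)) (a + b - 2 * x) x :=
      HasDerivAt.congr_deriv
        (((hasDerivAt_id x).sub_const a).mul ((hasDerivAt_const x b).sub (hasDerivAt_id x)))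
        (by simp only [id_eq]; ring)
    have h1 : HasDerivAt (fun x : ℝ => Real.sqrt ((x - a) * (b - x)))
        ((a + b - 2 * x) / (2 * s)) x :=
      HasDerivAt.congr_deriv ((Real.hasDerivAt_sqrt hprod.ne').comp x hpoly)
        (by rw [← hs]; ring)
    -- second piece
    have hv : HasDerivAt (fun x : ℝ => (2 * x - (a + b)) / (b - a)) (2 / (b - a)) x :=
      HasDerivAt.congr_deriv
        ((((hasDerivAt_id x).const_mul 2).sub_const (a + b)).div_const (b - a))
        (by ring)
    have hvlt : ((2 * x - (a + b)) / (b - a)) ^ 2 < 1 := by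
      rw [div_pow, div_lt_one (by positivity)]
      nlinarith
    have hv1 : (2 * x - (a + b)) / (b - a) ≠ -1 := by
      intro h; rw [h] at hvlt; norm_num at hvlt
    have hv2 : (2 * x - (a + b)) / (b - a) ≠ 1 := by
      intro h; rw [h] at hvlt; norm_num at hvlt
    have h2 : HasDerivAt (fun x : ℝ => (a + b) / 2 * arcsin ((2 * x - (a + b)) / (b - a)))
        ((a + b) / (2 * s)) x := by
      refine HasDerivAt.congr_deriv
        (((Real.hasDerivAt_arcsin hv1 hv2).comp x hv).const_mul ((a + b) / 2)) ?_
      rw [show Real.sqrt (1 - ((2 * x - (a + b)) / (b - a)) ^ 2) = 2 * s / (b - a) by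
        rw [show 1 - ((2 * x - (a + b)) / (b - a)) ^ 2 = (2 * s / (b - a)) ^ 2 by
          field_simp; nlinarith [hs2]]
        exact Real.sqrt_sq (by positivity)]
      field_simp
    -- third piece
    have hu : HasDerivAt (fun x : ℝ => ((a + b) * x - 2 * (a * b)) / ((b - a) * x))
        (2 * (a * b) / ((b - a) * x ^ 2)) x := by
      have hnum : HasDerivAt (fun x : ℝ => (a + b) * x - 2 * (a * b)) (a + b) x :=
        HasDerivAt.congr_deriv (((hasDerivAt_id x).const_mul (a + b)).sub_const (2 * (a * b)))
          (by ring)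
      have hden : HasDerivAt (fun x : ℝ => (b - a) * x) (b - a) x :=
        HasDerivAt.congr_deriv ((hasDerivAt_id x).const_mul (b - a)) (by ring)
      refine HasDerivAt.congr_deriv (hnum.div hden (by positivity)) ?_
      field_simp
      ring
    have husq : 1 - (((a + b) * x - 2 * (a * b)) / ((b - a) * x)) ^ 2
        = (2 * t * s / ((b - a) * x)) ^ 2 := by
      field_simp
      nlinarith [hs2, ht2]
    have hult : (((a + b) * x - 2 * (a * b)) / ((b - a) * x)) ^ 2 < 1 := by
      nlinarith [husq, pow_pos (div_pos (by positivity) (by positivity) :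
        (0:ℝ) < 2 * t * s / ((b - a) * x)) 2]
    have hu1 : ((a + b) * x - 2 * (a * b)) / ((b - a) * x) ≠ -1 := by
      intro h; rw [h] at hult; norm_num at hult
    have hu2 : ((a + b) * x - 2 * (a * b)) / ((b - a) * x) ≠ 1 := by
      intro h; rw [h] at hult; norm_num at hult
    have h3 : HasDerivAt (fun x : ℝ =>
        Real.sqrt (a * b) * arcsin (((a + b) * x - 2 * (a * b)) / ((b - a) * x)))
        (a * b / (x * s)) x := by
      refine HasDerivAt.congr_deriv
        (by have := ((Real.hasDerivAt_arcsin hu1 hu2).comp x hu).const_mul t; exact this) ?_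
      rw [show Real.sqrt (1 - (((a + b) * x - 2 * (a * b)) / ((b - a) * x)) ^ 2)
          = 2 * t * s / ((b - a) * x) by rw [husq]; exact Real.sqrt_sq (by positivity)]
      field_simp
    refine HasDerivAt.congr_deriv ((h1.add h2).sub h3) ?_
    rw [eq_div_iff hx0.ne']
    field_simp
    linear_combination (-2) * hs2
  have hint : IntervalIntegrable (fun x => Real.sqrt ((x - a) * (b - x)) / x)
      MeasureTheory.volume a b := by
    apply ContinuousOn.intervalIntegrable
    rw [Set.uIcc_of_le hab.le]
    apply ContinuousOn.div (by fun_prop) continuousOn_id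
    intro x hx; exact (lt_of_lt_of_le ha hx.1).ne'
  rw [intervalIntegral.integral_eq_sub_of_hasDerivAt_of_le hab.le hcont hderiv hint]
  have e1 : (2 * b - (a + b)) / (b - a) = 1 := by
    rw [div_eq_one_iff_eq hba.ne']; ring
  have e2 : (2 * a - (a + b)) / (b - a) = -1 := by
    rw [div_eq_iff hba.ne']; ring
  have e3 : ((a + b) * b - 2 * (a * b)) / ((b - a) * b) = 1 := by
    rw [div_eq_one_iff_eq (by positivity)]; ring
  have e4 : ((a + b) * a - 2 * (a * b)) / ((b - a) * a) = -1 := by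
    rw [div_eq_iff (by positivity)]; ring
  rw [e1, e2, e3, e4, Real.arcsin_one, Real.arcsin_neg_one]
  rw [show (b - a) * (b - b) = 0 by ring, show (a - a) * (b - a) = 0 by ring, Real.sqrt_zero]
  ring


lemma mp_key0 (b : ℝ) (hb : 0 < b) :
    ∫ x in (0:ℝ)..b, Real.sqrt (x * (b - x)) / x = π * (b / 2) := by
  have hcont : ContinuousOn (fun x =>
      Real.sqrt (x * (b - x)) + b / 2 * arcsin ((2 * x - b) / b)) (Set.Icc 0 b) := by
    apply Continuous.continuousOn
    exact (continuous_sqrt.comp (by continuity)).add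
      (continuous_const.mul (continuous_arcsin.comp (by continuity)))
  have hderiv : ∀ x ∈ Set.Ioo 0 b,
      HasDerivAt (fun x => Real.sqrt (x * (b - x)) + b / 2 * arcsin ((2 * x - b) / b))
        (Real.sqrt (x * (b - x)) / x) x := by
    intro x hx
    obtain ⟨hx0, hxb⟩ := hx
    have hprod : 0 < x * (b - x) := mul_pos hx0 (by linarith)
    set s := Real.sqrt (x * (b - x)) with hs
    have hs0 : 0 < s := Real.sqrt_pos.mpr hprod
    have hs2 : s ^ 2 = x * (b - x) := Real.sq_sqrt hprod.le
    have hpoly : HasDerivAt (fun x : ℝ => x * (b - x)) (b - 2 * x) x :=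
      HasDerivAt.congr_deriv
        ((hasDerivAt_id x).mul ((hasDerivAt_const x b).sub (hasDerivAt_id x)))
        (by simp only [id_eq]; ring)
    have h1 : HasDerivAt (fun x : ℝ => Real.sqrt (x * (b - x))) ((b - 2 * x) / (2 * s)) x :=
      HasDerivAt.congr_deriv ((Real.hasDerivAt_sqrt hprod.ne').comp x hpoly)
        (by rw [← hs]; ring)
    have hv : HasDerivAt (fun x : ℝ => (2 * x - b) / b) (2 / b) x :=
      HasDerivAt.congr_deriv ((((hasDerivAt_id x).const_mul 2).sub_const b).div_const b)
        (by ring)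
    have hvlt : ((2 * x - b) / b) ^ 2 < 1 := by
      rw [div_pow, div_lt_one (by positivity)]
      nlinarith
    have hv1 : (2 * x - b) / b ≠ -1 := by intro h; rw [h] at hvlt; norm_num at hvlt
    have hv2 : (2 * x - b) / b ≠ 1 := by intro h; rw [h] at hvlt; norm_num at hvlt
    have h2 : HasDerivAt (fun x : ℝ => b / 2 * arcsin ((2 * x - b) / b)) (b / (2 * s)) x := by
      refine HasDerivAt.congr_deriv
        (((Real.hasDerivAt_arcsin hv1 hv2).comp x hv).const_mul (b / 2)) ?_
      rw [show 1 - ((2 * x - b) / b) ^ 2 = (2 * s / b) ^ 2 by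
        field_simp; linear_combination (-4:ℝ) * hs2,
        Real.sqrt_sq (by positivity)]
      field_simp
    refine HasDerivAt.congr_deriv (h1.add h2) ?_
    rw [eq_div_iff hx0.ne']
    field_simp
    linear_combination (-2:ℝ) * hs2
  have hint : IntervalIntegrable (fun x => Real.sqrt (x * (b - x)) / x)
      MeasureTheory.volume 0 b := by
    apply IntervalIntegrable.mono_fun
      ((intervalIntegral.intervalIntegrable_rpow' (by norm_num : (-1:ℝ) < -1/2)).const_mul
        (Real.sqrt b))
    · apply Measurable.aestronglyMeasurable
      fun_prop
    · rw [Set.uIoc_of_le hb.le]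
      filter_upwards [MeasureTheory.ae_restrict_mem measurableSet_Ioc] with x hx
      obtain ⟨hx0, hxb⟩ := hx
      have hpow : x ^ (-1/2 : ℝ) = (Real.sqrt x)⁻¹ := by
        rw [show (-1/2 : ℝ) = -(1/2) by norm_num, Real.rpow_neg hx0.le, ← Real.sqrt_eq_rpow]
      have hxpos : (0:ℝ) < x ^ (-1/2 : ℝ) := Real.rpow_pos_of_pos hx0 _
      rw [Real.norm_eq_abs, Real.norm_eq_abs, abs_of_nonneg (by positivity),
        abs_of_nonneg (by positivity)]
      rw [hpow, Real.sqrt_mul hx0.le, div_le_iff₀ hx0]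
      have hxx : Real.sqrt b * (Real.sqrt x)⁻¹ * x = Real.sqrt b * Real.sqrt x := by
        field_simp
        rw [Real.sq_sqrt hx0.le]
      rw [hxx, mul_comm (Real.sqrt b)]
      gcongr
      linarith
  rw [intervalIntegral.integral_eq_sub_of_hasDerivAt_of_le hb.le hcont hderiv hint]
  have e1 : (2 * b - b) / b = 1 := by rw [div_eq_one_iff_eq hb.ne']; ring
  have e2 : (2 * 0 - b) / b = -1 := by rw [div_eq_iff hb.ne']; ring
  rw [e1, e2, Real.arcsin_one, Real.arcsin_neg_one]
  rw [show b * (b - b) = 0 by ring, show (0:ℝ) * (b - 0) = 0 by ring, Real.sqrt_zero]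
  ring

/-- The Marchenko–Pastur distribution with ratio `c` and scale `σ²` is a probability
measure: the atom `(1 - 1/c)⁺` at `0` plus the integral of the density
`√((x - x⁻)(x⁺ - x))/(2σ²cπx)` over `[x⁻, x⁺]` equals `1`. -/
theorem marchenko_pastur_total_mass (σ c : ℝ) (hσ : 0 < σ) (hc : 0 < c) :
    max (1 - 1 / c) 0
      + ∫ x in (σ ^ 2 * (1 - Real.sqrt c) ^ 2)..(σ ^ 2 * (1 + Real.sqrt c) ^ 2),
          Real.sqrt ((x - σ ^ 2 * (1 - Real.sqrt c) ^ 2)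
              * (σ ^ 2 * (1 + Real.sqrt c) ^ 2 - x))
            / (2 * σ ^ 2 * c * π * x)
      = 1 := by
  have hsc : 0 < Real.sqrt c := Real.sqrt_pos.mpr hc
  have hsc2 : Real.sqrt c ^ 2 = c := Real.sq_sqrt hc.le
  set A := σ ^ 2 * (1 - Real.sqrt c) ^ 2 with hA
  set B := σ ^ 2 * (1 + Real.sqrt c) ^ 2 with hB
  have hB0 : 0 < B := by positivity
  have hAB : A < B := by
    rw [hA, hB]
    have : (1 - Real.sqrt c) ^ 2 < (1 + Real.sqrt c) ^ 2 := by nlinarith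
    nlinarith [sq_nonneg σ, pow_pos hσ 2]
  have hK : (0:ℝ) < 2 * σ ^ 2 * c * π := by positivity
  have hsplit : ∀ x : ℝ, Real.sqrt ((x - A) * (B - x)) / (2 * σ ^ 2 * c * π * x)
      = Real.sqrt ((x - A) * (B - x)) / x * (2 * σ ^ 2 * c * π)⁻¹ := by
    intro x
    rw [div_eq_mul_inv, mul_inv, div_eq_mul_inv]
    ring
  simp only [hsplit]
  rw [intervalIntegral.integral_mul_const]
  by_cases hc1 : c = 1
  · subst hc1
    have hA0 : A = 0 := by rw [hA, Real.sqrt_one]; ring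
    rw [hA0]
    simp only [sub_zero]
    rw [mp_key0 B hB0]
    have hBval : B = 4 * σ ^ 2 := by rw [hB, Real.sqrt_one]; ring
    rw [hBval]
    have hπ : (0:ℝ) < π := Real.pi_pos
    field_simp
    norm_num
  · have hsc1 : Real.sqrt c ≠ 1 := by
      intro h
      apply hc1
      rw [← hsc2, h, one_pow]
    have hA0 : 0 < A := by
      rw [hA]
      exact mul_pos (pow_pos hσ 2) (pow_two_pos_of_ne_zero (sub_ne_zero.mpr (Ne.symm hsc1)))
    rw [mp_key A B hA0 hAB]
    have hAaddB : A + B = 2 * σ ^ 2 * (1 + c) := by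
      rw [hA, hB]
      linear_combination (2 * σ ^ 2) * hsc2
    have hABmul : Real.sqrt (A * B) = σ ^ 2 * |1 - c| := by
      rw [show A * B = (σ ^ 2 * (1 - c)) ^ 2 by
        rw [hA, hB]
        linear_combination (σ ^ 4 * (Real.sqrt c ^ 2 + c - 2)) * hsc2]
      rw [Real.sqrt_sq_eq_abs, abs_mul, abs_of_nonneg (by positivity : (0:ℝ) ≤ σ ^ 2)]
    have hπ : (0:ℝ) < π := Real.pi_pos
    rcases lt_or_gt_of_ne hc1 with h | h
    · have hmax : max (1 - 1 / c) 0 = 0 := by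
        apply max_eq_right
        have : 1 < 1 / c := by rw [lt_div_iff₀ hc]; linarith
        linarith
      rw [hmax, hAaddB, hABmul, abs_of_nonneg (by linarith : (0:ℝ) ≤ 1 - c)]
      field_simp
      ring
    · have hmax : max (1 - 1 / c) 0 = 1 - 1 / c := by
        apply max_eq_left
        have : 1 / c < 1 := by rw [div_lt_one hc]; linarith
        linarith
      rw [hmax, hAaddB, hABmul, abs_of_nonpos (by linarith : (1:ℝ) - c ≤ 0)]
      field_simp
      ring
end

section
/- Let σ > 0, c > 0 and z ∈ ℂ \ ℝ. If m satisfies m = 1/(-z(1 + σ²c·m) + σ²(1-c)), then with w = z(1 + σ²c·m)² - σ²(1-c)(1 + σ²c·m) and g = ((1-c) + c·z²·m')/( (1-c) - c·z·m ), where m' denotes the derivative of m at z, the identity g = w'/(1 + σ²c·m) holds, where w' is the derivative of w at z. -/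
/-- If `m` satisfies the Marchenko–Pastur fixed point equation on `ℂ \ ℝ` and has
derivative `m'` at `z ∈ ℂ \ ℝ`, then with
`w(u) = u(1 + σ²c m(u))² - σ²(1-c)(1 + σ²c m(u))` and
`g = ((1-c) + c z² m')/((1-c) - c z m(z))`, the identity `g = w'(z)/(1 + σ²c m(z))`
holds. -/
theorem g_eq_wderiv_div (σ c : ℝ) (hσ : 0 < σ) (hc : 0 < c) (z : ℂ) (hz : z.im ≠ 0)
    (m : ℂ → ℂ) (m' : ℂ)
    (hfix : ∀ u : ℂ, u.im ≠ 0 →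
      m u = 1 / (-u * (1 + (σ : ℂ) ^ 2 * (c : ℂ) * m u) + (σ : ℂ) ^ 2 * (1 - (c : ℂ))))
    (hm : HasDerivAt m m' z)
    (hden1 : (1 - (c : ℂ)) - (c : ℂ) * z * m z ≠ 0)
    (hden2 : 1 + (σ : ℂ) ^ 2 * (c : ℂ) * m z ≠ 0)
    (w' : ℂ)
    (hw : HasDerivAt
      (fun u : ℂ => u * (1 + (σ : ℂ) ^ 2 * (c : ℂ) * m u) ^ 2
        - (σ : ℂ) ^ 2 * (1 - (c : ℂ)) * (1 + (σ : ℂ) ^ 2 * (c : ℂ) * m u)) w' z) :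
    ((1 - (c : ℂ)) + (c : ℂ) * z ^ 2 * m') / ((1 - (c : ℂ)) - (c : ℂ) * z * m z)
      = w' / (1 + (σ : ℂ) ^ 2 * (c : ℂ) * m z) := by
  set K : ℂ := (σ : ℂ) ^ 2 * (c : ℂ) with hK
  -- the fixed point equation in product form
  have haux : ∀ u : ℂ, u.im ≠ 0 →
      m u * (-u * (1 + K * m u) + (σ : ℂ) ^ 2 * (1 - (c : ℂ))) = 1 := by
    intro u hu
    by_cases hD : (-u * (1 + K * m u) + (σ : ℂ) ^ 2 * (1 - (c : ℂ))) = 0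
    · exfalso
      have h0 := hfix u hu
      rw [hD, div_zero] at h0
      rw [h0] at hD
      have hu' : u = ((σ ^ 2 * (1 - c) : ℝ) : ℂ) := by push_cast; linear_combination -hD
      have him := congrArg Complex.im hu'
      rw [Complex.ofReal_im] at him
      exact hu him
    · have h0 := hfix u hu
      rw [eq_div_iff hD] at h0
      exact h0
  have heq := haux z hz
  -- derivative of the constant function m u * D u = 1
  have h1 : HasDerivAt (fun u : ℂ => 1 + K * m u) (K * m') z :=
    ((hm.const_mul K).const_add 1)
  have h2 : HasDerivAt (fun u : ℂ => -u * (1 + K * m u))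
      ((-1) * (1 + K * m z) + (-z) * (K * m')) z :=
    (hasDerivAt_id z).neg.mul h1
  have h3 : HasDerivAt
      (fun u : ℂ => -u * (1 + K * m u) + (σ : ℂ) ^ 2 * (1 - (c : ℂ)))
      ((-1) * (1 + K * m z) + (-z) * (K * m')) z :=
    h2.add_const _
  have hF : HasDerivAt
      (fun u : ℂ => m u * (-u * (1 + K * m u) + (σ : ℂ) ^ 2 * (1 - (c : ℂ))))
      (m' * (-z * (1 + K * m z) + (σ : ℂ) ^ 2 * (1 - (c : ℂ)))
        + m z * ((-1) * (1 + K * m z) + (-z) * (K * m'))) z :=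
    hm.mul h3
  have hopen : IsOpen {u : ℂ | u.im ≠ 0} := by
    have : {u : ℂ | u.im ≠ 0} = Complex.im ⁻¹' {(0 : ℝ)}ᶜ := rfl
    rw [this]
    exact (isOpen_compl_singleton).preimage Complex.continuous_im
  have hev : (fun u : ℂ => m u * (-u * (1 + K * m u) + (σ : ℂ) ^ 2 * (1 - (c : ℂ))))
      =ᶠ[nhds z] fun _ => (1 : ℂ) :=
    Filter.eventuallyEq_of_mem (hopen.mem_nhds hz) (fun u hu => haux u hu)
  have hF0 : HasDerivAt
      (fun u : ℂ => m u * (-u * (1 + K * m u) + (σ : ℂ) ^ 2 * (1 - (c : ℂ)))) 0 z :=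
    (hasDerivAt_const z (1 : ℂ)).congr_of_eventuallyEq hev
  have hder : m' * (-z * (1 + K * m z) + (σ : ℂ) ^ 2 * (1 - (c : ℂ)))
      + m z * ((-1) * (1 + K * m z) + (-z) * (K * m')) = 0 := hF.unique hF0
  -- explicit derivative of w
  have hterm1 : HasDerivAt (fun u : ℂ => u * (1 + K * m u) ^ 2)
      (1 * (1 + K * m z) ^ 2 + z * ((2 : ℕ) * (1 + K * m z) ^ 1 * (K * m'))) z :=
    (hasDerivAt_id z).mul (h1.pow 2)
  have hterm2 : HasDerivAt (fun u : ℂ => (σ : ℂ) ^ 2 * (1 - (c : ℂ)) * (1 + K * m u))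
      ((σ : ℂ) ^ 2 * (1 - (c : ℂ)) * (K * m')) z := h1.const_mul _
  have hwfull := hterm1.sub hterm2
  have hw'eq : w' = 1 * (1 + K * m z) ^ 2 + z * ((2 : ℕ) * (1 + K * m z) ^ 1 * (K * m'))
      - (σ : ℂ) ^ 2 * (1 - (c : ℂ)) * (K * m') := hw.unique hwfull
  rw [div_eq_div_iff hden1 hden2]
  push_cast at hw'eq
  linear_combination ((c : ℂ) * (-z * (1 + K * m z) + (σ : ℂ) ^ 2 * (1 - (c : ℂ)))) * hder
    - ((1 - (c : ℂ)) - (c : ℂ) * z * m z) * hw'eq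
end
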